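/- There do not exist real numbers s, t with 0 < s < 1, 0 < t < 1 and a monic polynomial b(x) with nonnegative real coefficients, b(0) = 1, such that (1 + s x + t x^2 + x^6) · b(x) has all coefficients in {0,1}. -/
import Mathlib


open Polynomial

theorem no_unfair_one_sx_tx2_x6 :
    ¬ ∃ (s t : ℝ) (b : ℝ[X]), 0 < s ∧ s < 1 ∧ 0 < t ∧ t < 1 ∧ b.Monic ∧ b.coeff 0 = 1 ∧
      (∀ n, 0 ≤ b.coeff n) ∧
      (∀ n, ((1 + C s * X + C t * X ^ 2 + X ^ 6) * b).coeff n = 0 ∨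
            ((1 + C s * X + C t * X ^ 2 + X ^ 6) * b).coeff n = 1) := by
  rintro ⟨s, t, b, hs0, hs1, ht0, ht1, -, hb0, hbn, hc⟩
  have key : ∀ n, ((1 + C s * X + C t * X ^ 2 + X ^ 6) * b).coeff n
      = b.coeff n + s * (if 1 ≤ n then b.coeff (n-1) else 0)
        + t * (if 2 ≤ n then b.coeff (n-2) else 0)
        + (if 6 ≤ n then b.coeff (n-6) else 0) := by
    intro n
    have e : (1 + C s * X + C t * X ^ 2 + X ^ 6) * b
        = b + C s * (b * X^1) + C t * (b * X^2) + b * X^6 := by ring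
    rw [e]
    simp only [coeff_add, coeff_C_mul, coeff_mul_X_pow', mul_ite, mul_zero]
  have nb1 := hbn 1; have nb2 := hbn 2; have nb3 := hbn 3
  have nb4 := hbn 4; have nb5 := hbn 5; have nb6 := hbn 6
  have c1 := hc 1; rw [key 1] at c1; norm_num [hb0] at c1
  have c2 := hc 2; rw [key 2] at c2; norm_num [hb0] at c2
  have c3 := hc 3; rw [key 3] at c3; norm_num [hb0] at c3
  have c4 := hc 4; rw [key 4] at c4; norm_num [hb0] at c4
  have c5 := hc 5; rw [key 5] at c5; norm_num [hb0] at c5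
  have c6 := hc 6; rw [key 6] at c6; norm_num [hb0] at c6
  have sb1 := mul_nonneg hs0.le nb1
  have sb2 := mul_nonneg hs0.le nb2
  have sb3 := mul_nonneg hs0.le nb3
  have sb4 := mul_nonneg hs0.le nb4
  have sb5 := mul_nonneg hs0.le nb5
  have tb1 := mul_nonneg ht0.le nb1
  have tb2 := mul_nonneg ht0.le nb2
  have tb3 := mul_nonneg ht0.le nb3
  have tb4 := mul_nonneg ht0.le nb4
  -- from c1 : b1 = 1 - s
  have hb1 : b.coeff 1 = 1 - s := by
    rcases c1 with h | h
    · linarith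
    · linarith
  -- from c6 : b4 = b5 = 0
  have h6 : b.coeff 6 + s * b.coeff 5 + t * b.coeff 4 = 0 := by
    rcases c6 with h | h
    · linarith
    · linarith
  have hb4 : b.coeff 4 = 0 := by
    have h0 : t * b.coeff 4 = 0 := by linarith
    rcases mul_eq_zero.mp h0 with h | h
    · linarith
    · exact h
  have hb5 : b.coeff 5 = 0 := by
    have h0 : s * b.coeff 5 = 0 := by linarith
    rcases mul_eq_zero.mp h0 with h | h
    · linarith
    · exact h
  -- from c2 : b2 = 1 - t - s * b1
  have hb2 : b.coeff 2 = 1 - t - s * b.coeff 1 := by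
    rcases c2 with h | h
    · linarith
    · linarith
  have hb2le : b.coeff 2 ≤ 1 := by linarith
  -- from c3 : b3 + s*b2 + t*b1 = 1
  have htb1 : 0 < t * b.coeff 1 := mul_pos ht0 (by rw [hb1]; linarith)
  have hc3 : b.coeff 3 + s * b.coeff 2 + t * b.coeff 1 = 1 := by
    rcases c3 with h | h
    · linarith
    · linarith
  have hb3le : b.coeff 3 ≤ 1 := by linarith
  -- from c5 : b3 = 0
  have hb3 : b.coeff 3 = 0 := by
    have hle : t * b.coeff 3 ≤ t * 1 := mul_le_mul_of_nonneg_left hb3le ht0.le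
    rcases c5 with h | h
    · rw [hb4, hb5] at h
      have h0 : t * b.coeff 3 = 0 := by linarith
      rcases mul_eq_zero.mp h0 with h' | h'
      · linarith
      · exact h'
    · rw [hb4, hb5] at h
      linarith
  -- from c4 : b2 = 0
  have hb2' : b.coeff 2 = 0 := by
    have hle : t * b.coeff 2 ≤ t * 1 := mul_le_mul_of_nonneg_left hb2le ht0.le
    rcases c4 with h | h
    · rw [hb4, hb3] at h
      have h0 : t * b.coeff 2 = 0 := by linarith
      rcases mul_eq_zero.mp h0 with h' | h'
      · linarith
      · exact h'
    · rw [hb4, hb3] at h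
      linarith
  -- contradiction: t * (1 - s) = 1 but t < 1, 1 - s < 1
  rw [hb3, hb2', hb1] at hc3
  have : t * (1 - s) ≤ 1 * (1 - s) :=
    mul_le_mul_of_nonneg_right ht1.le (by linarith)
  linarith
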